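/- Let G = (X ∪ Y, E) be a bipartite graph with parts X and Y, |E| = t, and let M be its q-th color compatibility matrix over F_p: M is indexed by colorings x : X → Fin q and y : Y → Fin q, with M[x,y] = 1 if x(u) ≠ y(v) for every edge uv ∈ E (u ∈ X, v ∈ Y), and 0 otherwise. Then rank_{F_p}(M) ≤ (q−1)^t if p divides q−1, and rank_{F_p}(M) ≤ q^t otherwise. -/

import Mathlib

open Matrix Finset

lemma rank_aux (p q r : ℕ) [Fact p.Prime] {X Y : Type*}
    [Fintype X] [Fintype Y] [DecidableEq X] [DecidableEq Y]
    (E : Finset (X × Y))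
    (M : Matrix (X → Fin q) (Y → Fin q) (ZMod p))
    (hM : ∀ x y, M x y = if ∀ e ∈ E, x e.1 ≠ y e.2 then 1 else 0)
    (B : Matrix (Fin q) (Fin r) (ZMod p)) (C : Matrix (Fin r) (Fin q) (ZMod p))
    (hBC : ∀ a b, (B * C) a b = if a ≠ b then 1 else 0) :
    M.rank ≤ r ^ E.card := by
  classical
  set ι := {e : X × Y // e ∈ E} with hι
  let B' : Matrix (X → Fin q) (ι → Fin r) (ZMod p) :=
    fun x g => ∏ e : ι, B (x e.1.1) (g e)
  let C' : Matrix (ι → Fin r) (Y → Fin q) (ZMod p) :=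
    fun g y => ∏ e : ι, C (g e) (y e.1.2)
  have hfact : M = B' * C' := by
    ext x y
    rw [hM, Matrix.mul_apply]
    have h1 : ∀ g : ι → Fin r, B' x g * C' g y
        = ∏ e : ι, (B (x e.1.1) (g e) * C (g e) (y e.1.2)) := by
      intro g; simp [B', C', Finset.prod_mul_distrib]
    simp only [h1]
    have key := Finset.prod_univ_sum (fun _ : ι => (Finset.univ : Finset (Fin r)))
      (fun e k => B (x e.1.1) k * C k (y e.1.2))
    rw [Fintype.piFinset_univ] at key
    rw [← key]
    have h2 : ∀ e : ι, (∑ k : Fin r, B (x e.1.1) k * C k (y e.1.2))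
        = if x e.1.1 ≠ y e.1.2 then 1 else 0 := by
      intro e; rw [← Matrix.mul_apply, hBC]
    simp only [h2]
    rw [Finset.prod_boole]
    congr 1
    simp only [eq_iff_iff]
    constructor
    · intro h e _; exact h e.1 e.2
    · intro h e he; exact h ⟨e, he⟩ (Finset.mem_univ _)
  have h3 : M.rank ≤ B'.rank := hfact ▸ Matrix.rank_mul_le_left B' C'
  refine h3.trans ?_
  calc B'.rank ≤ Fintype.card (ι → Fin r) := Matrix.rank_le_card_width B'
  _ = r ^ E.card := by simp [Fintype.card_fun, hι]


/-- Rank bound for the color compatibility matrix of a bipartite graph with t edges: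
at most (q−1)^t over F_p if p ∣ q−1, and at most q^t otherwise. -/
theorem stmt5 (p q : ℕ) [Fact p.Prime] {X Y : Type*}
    [Fintype X] [Fintype Y] [DecidableEq X] [DecidableEq Y]
    (E : Finset (X × Y))
    (M : Matrix (X → Fin q) (Y → Fin q) (ZMod p))
    (hM : ∀ x y, M x y = if ∀ e ∈ E, x e.1 ≠ y e.2 then 1 else 0) :
    ((p : ℤ) ∣ (q : ℤ) - 1 → M.rank ≤ (q - 1) ^ E.card) ∧
    (¬ (p : ℤ) ∣ (q : ℤ) - 1 → M.rank ≤ q ^ E.card) := by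
  constructor
  · intro hdvd
    have hq1 : (q : ZMod p) = 1 := by
      have h0 : (((q : ℤ) - 1 : ℤ) : ZMod p) = 0 :=
        (ZMod.intCast_zmod_eq_zero_iff_dvd _ p).mpr hdvd
      push_cast at h0
      rwa [sub_eq_zero] at h0
    have hqpos : 1 ≤ q := by
      rcases Nat.eq_zero_or_pos q with h | h
      · subst h; simp at hq1
      · exact h
    have hcast : ((q - 1 : ℕ) : ZMod p) = 0 := by
      rw [Nat.cast_sub hqpos, hq1]; ring
    set B1 : Matrix (Fin q) (Fin (q - 1)) (ZMod p) :=
      fun a k => if (a : ℕ) = (k : ℕ) then 0 else 1 with hB1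
    set C1 : Matrix (Fin (q - 1)) (Fin q) (ZMod p) :=
      fun k b => if (b : ℕ) = (k : ℕ) then 1 else if (b : ℕ) = q - 1 then -1 else 0 with hC1
    refine rank_aux p q (q - 1) E M hM B1 C1 ?_
    intro a b
    rw [Matrix.mul_apply]
    by_cases hb : (b : ℕ) = q - 1
    · have hCk : ∀ k : Fin (q - 1), C1 k b = -1 := by
        intro k
        have hk := k.isLt
        have hne : ¬ (b : ℕ) = (k : ℕ) := by omega
        simp only [hC1]
        rw [if_neg hne, if_pos hb]
      have step : (∑ k, B1 a k * C1 k b) = -(∑ k : Fin (q - 1), B1 a k) := by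
        rw [← Finset.sum_neg_distrib]
        refine Finset.sum_congr rfl fun k _ => by rw [hCk k]; ring
      rw [step]
      by_cases ha : (a : ℕ) = q - 1
      · have hBk : ∀ k : Fin (q - 1), B1 a k = 1 := by
          intro k
          have hk := k.isLt
          have hne : ¬ (a : ℕ) = (k : ℕ) := by omega
          simp only [hB1]; rw [if_neg hne]
        have hab : a = b := Fin.ext (by omega)
        rw [Finset.sum_congr rfl fun k _ => hBk k]
        simp [Finset.card_univ, nsmul_eq_mul, hcast, hab]
      · have halt : (a : ℕ) < q - 1 := by have := a.isLt; omega
        have hsum : (∑ k : Fin (q - 1), B1 a k) = (((q - 1 : ℕ) : ZMod p)) - 1 := by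
          have hBk : ∀ k : Fin (q - 1), B1 a k
              = 1 - (if (⟨(a : ℕ), halt⟩ : Fin (q - 1)) = k then 1 else 0) := by
            intro k
            simp only [hB1]
            by_cases h : (a : ℕ) = (k : ℕ)
            · rw [if_pos h, if_pos (show (⟨(a : ℕ), halt⟩ : Fin (q - 1)) = k from Fin.ext h)]
              ring
            · rw [if_neg h, if_neg (show ¬(⟨(a : ℕ), halt⟩ : Fin (q - 1)) = k from
                fun hc => h (congrArg Fin.val hc))]
              ring
          rw [Finset.sum_congr rfl fun k _ => hBk k, Finset.sum_sub_distrib,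
            Finset.sum_ite_eq Finset.univ (⟨(a : ℕ), halt⟩ : Fin (q - 1))
              (fun _ => (1 : ZMod p))]
          simp [Finset.card_univ, nsmul_eq_mul]
        have hab : a ≠ b := fun h => ha (by rw [h]; exact hb)
        rw [hsum, hcast, if_pos hab]
        ring
    · have hblt : (b : ℕ) < q - 1 := by have := b.isLt; omega
      have hCk : ∀ k : Fin (q - 1), C1 k b
          = if (⟨(b : ℕ), hblt⟩ : Fin (q - 1)) = k then 1 else 0 := by
        intro k
        simp only [hC1]
        by_cases h : (b : ℕ) = (k : ℕ)
        · rw [if_pos h, if_pos (show (⟨(b : ℕ), hblt⟩ : Fin (q - 1)) = k from Fin.ext h)]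
        · rw [if_neg h, if_neg hb, if_neg (show ¬(⟨(b : ℕ), hblt⟩ : Fin (q - 1)) = k from
            fun hc => h (congrArg Fin.val hc))]
      have step : (∑ k, B1 a k * C1 k b) = B1 a ⟨(b : ℕ), hblt⟩ := by
        rw [Finset.sum_congr rfl fun k _ => by rw [hCk k]]
        simp only [mul_ite, mul_one, mul_zero]
        rw [Finset.sum_ite_eq Finset.univ (⟨(b : ℕ), hblt⟩ : Fin (q - 1)) (B1 a)]
        simp
      rw [step]
      simp only [hB1]
      by_cases h : a = b
      · rw [if_pos (show (a : ℕ) = ((⟨(b : ℕ), hblt⟩ : Fin (q - 1)) : ℕ) from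
          congrArg Fin.val h), if_neg (by simp [h])]
      · rw [if_neg (fun hc => h (Fin.ext hc)), if_pos h]
  · intro _
    refine rank_aux p q q E M hM (fun a b => if a ≠ b then 1 else 0) 1 ?_
    intro a b
    exact congrFun (congrFun (Matrix.mul_one _) a) b
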